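/- Let ℋ = ℂ²⊗ℂ²⊗ℂ²⊗ℂ² with the action of Ĝ = SL(2,ℂ)⁴, and let u₁ = e₀₀₀₀+e₁₁₁₁ and u₄ = e₀₀₁₁+e₁₁₀₀. Let λ ∈ ℂ with λ ≠ 0, and set Z° = {(A^#, A, B^#, B) : A, B ∈ SL(2,ℂ)}, where for A = [[a,b],[c,d]] one sets A^# = [[d,c],[b,a]]. Then the stabiliser in Ĝ of s = λ(u₁−u₄) equals Z° ∪ (−I,I,−I,I)·Z°. -/
import Mathlib


/-- The Hilbert space of four qubits, in coordinates with respect to the basis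
`e_{i₁i₂i₃i₄} = e_{i₁} ⊗ e_{i₂} ⊗ e_{i₃} ⊗ e_{i₄}` of `ℂ² ⊗ ℂ² ⊗ ℂ² ⊗ ℂ²`. -/
abbrev H4 : Type := Fin 2 → Fin 2 → Fin 2 → Fin 2 → ℂ

abbrev SL2 := Matrix.SpecialLinearGroup (Fin 2) ℂ

/-- The group `Ĝ = SL(2,ℂ)⁴`. -/
abbrev G4 := SL2 × SL2 × SL2 × SL2

/-- The action of `SL(2,ℂ)⁴` on `ℂ² ⊗ ℂ² ⊗ ℂ² ⊗ ℂ²`, given in coordinates: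
it is the linear extension of `(A,B,C,D)·(v₁⊗v₂⊗v₃⊗v₄) = Av₁⊗Bv₂⊗Cv₃⊗Dv₄`. -/
noncomputable def act (g : G4) (x : H4) : H4 := fun i1 i2 i3 i4 =>
  ∑ j1 : Fin 2, ∑ j2 : Fin 2, ∑ j3 : Fin 2, ∑ j4 : Fin 2,
    g.1 i1 j1 * g.2.1 i2 j2 * g.2.2.1 i3 j3 * g.2.2.2 i4 j4 * x j1 j2 j3 j4

/-- The basis vector `e_{i₁i₂i₃i₄}`. -/
def e (i1 i2 i3 i4 : Fin 2) : H4 := fun j1 j2 j3 j4 =>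
  if j1 = i1 ∧ j2 = i2 ∧ j3 = i3 ∧ j4 = i4 then 1 else 0

noncomputable def u1 : H4 := e 0 0 0 0 + e 1 1 1 1
noncomputable def u4 : H4 := e 0 0 1 1 + e 1 1 0 0

/-- For `A = [[a,b],[c,d]]`, `A^# = [[d,c],[b,a]]`. -/
noncomputable def sharp (A : SL2) : SL2 :=
  ⟨!![A.1 1 1, A.1 1 0; A.1 0 1, A.1 0 0], by
    have h := A.2
    rw [Matrix.det_fin_two] at h
    rw [Matrix.det_fin_two_of]
    linear_combination h⟩

noncomputable def negI : SL2 := ⟨!![-1, 0; 0, -1], by norm_num [Matrix.det_fin_two_of]⟩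

/-- The identity component `Z° = {(A^#, A, B^#, B) : A, B ∈ SL(2,ℂ)}`. -/
noncomputable def Z0 : Set G4 := {g : G4 | ∃ A B : SL2, g = (sharp A, A, sharp B, B)}


private def wc (i j : Fin 2) : ℂ :=
  if i = 0 then (if j = 0 then 1 else 0) else (if j = 0 then 0 else -1)

private lemma s_apply (lam : ℂ) (i1 i2 i3 i4 : Fin 2) :
    (lam • (u1 - u4)) i1 i2 i3 i4 = lam * (wc i1 i2 * wc i3 i4) := by
  fin_cases i1 <;> fin_cases i2 <;> fin_cases i3 <;> fin_cases i4 <;>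
    simp [u1, u4, e, wc]

private lemma act_apply (g : G4) (lam : ℂ) (i1 i2 i3 i4 : Fin 2) :
    act g (lam • (u1 - u4)) i1 i2 i3 i4 =
      lam * ((g.1 i1 0 * g.2.1 i2 0 - g.1 i1 1 * g.2.1 i2 1) *
        (g.2.2.1 i3 0 * g.2.2.2 i4 0 - g.2.2.1 i3 1 * g.2.2.2 i4 1)) := by
  simp [act, u1, u4, e, Fin.sum_univ_two]
  ring

private lemma sharp_pair (A : SL2) (i j : Fin 2) :
    (sharp A) i 0 * A j 0 - (sharp A) i 1 * A j 1 = wc i j := by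
  have hA := A.2
  rw [Matrix.det_fin_two] at hA
  fin_cases i <;> fin_cases j <;> simp [sharp, wc]
  · linear_combination hA
  · ring
  · ring
  · linear_combination -hA

private lemma pair_struct (M N : SL2) (t : ℂ)
    (h1 : M 0 0 * N 0 0 - M 0 1 * N 0 1 = t)
    (h2 : M 0 0 * N 1 0 - M 0 1 * N 1 1 = 0)
    (h3 : M 1 0 * N 0 0 - M 1 1 * N 0 1 = 0)
    (h4 : M 1 0 * N 1 0 - M 1 1 * N 1 1 = -t) :
    t * t = 1 ∧ (∀ i j, (M : Matrix (Fin 2) (Fin 2) ℂ) i j = t * (sharp N) i j) := by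
  have hM := M.2
  have hN := N.2
  rw [Matrix.det_fin_two] at hM hN
  refine ⟨?_, ?_⟩
  · linear_combination (M 1 0 * N 1 0 - M 1 1 * N 1 1) * h1 + t * h4
      - (M 1 0 * N 0 0 - M 1 1 * N 0 1) * h2
      + (N 0 0 * N 1 1 - N 0 1 * N 1 0) * hM + hN
  · intro i j
    fin_cases i <;> fin_cases j <;> simp [sharp]
    · linear_combination N 1 1 * h1 - N 0 1 * h2 - M 0 0 * hN
    · linear_combination N 1 0 * h1 - N 0 0 * h2 - M 0 1 * hN
    · linear_combination N 1 1 * h3 - N 0 1 * h4 - M 1 0 * hN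
    · linear_combination N 1 0 * h3 - N 0 0 * h4 - M 1 1 * hN

private lemma neg_coe (A : SL2) (k l : Fin 2) : (negI * A : SL2) k l = -(A k l) := by
  show (negI.1 * A.1) k l = -(A.1 k l)
  fin_cases k <;> simp [negI, Matrix.mul_apply, Fin.sum_univ_two]

private lemma neg_sharp_pair (A : SL2) (i j : Fin 2) :
    (negI * sharp A : SL2) i 0 * A j 0 - (negI * sharp A : SL2) i 1 * A j 1 = -wc i j := by
  rw [neg_coe, neg_coe]
  linear_combination -sharp_pair A i j

private lemma act_apply' (M N P Q : SL2) (lam : ℂ) (i1 i2 i3 i4 : Fin 2) :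
    act (M, N, P, Q) (lam • (u1 - u4)) i1 i2 i3 i4 =
      lam * ((M i1 0 * N i2 0 - M i1 1 * N i2 1) *
        (P i3 0 * Q i4 0 - P i3 1 * Q i4 1)) :=
  act_apply (M, N, P, Q) lam i1 i2 i3 i4

/-- The stabiliser of `s = λ(u₁ - u₄)` in `SL(2,ℂ)⁴` equals
`Z° ∪ (-I,I,-I,I)·Z°`. -/
theorem stabiliser_semisimple_A3 (lam : ℂ) (hlam : lam ≠ 0) :
    {g : G4 | act g (lam • (u1 - u4)) = lam • (u1 - u4)} =
      Z0 ∪ (fun t : G4 => (negI, 1, negI, 1) * t) '' Z0 := by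
  ext g
  simp only [Set.mem_setOf_eq, Set.mem_union, Set.mem_image, Z0]
  constructor
  · intro hg
    obtain ⟨M, N, P, Q⟩ := g
    have key : ∀ i1 i2 i3 i4 : Fin 2,
        (M i1 0 * N i2 0 - M i1 1 * N i2 1) *
          (P i3 0 * Q i4 0 - P i3 1 * Q i4 1) = wc i1 i2 * wc i3 i4 := by
      intro i1 i2 i3 i4
      have h := congrFun (congrFun (congrFun (congrFun hg i1) i2) i3) i4
      rw [act_apply', s_apply] at h
      exact mul_left_cancel₀ hlam h
    set t := M 0 0 * N 0 0 - M 0 1 * N 0 1 with ht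
    set u := P 0 0 * Q 0 0 - P 0 1 * Q 0 1 with hu
    have htu : t * u = 1 := by simpa [wc] using key 0 0 0 0
    have ht0 : t ≠ 0 := left_ne_zero_of_mul_eq_one htu
    have hu0 : u ≠ 0 := right_ne_zero_of_mul_eq_one htu
    have hF01 : M 0 0 * N 1 0 - M 0 1 * N 1 1 = 0 :=
      (mul_eq_zero.mp (by simpa [wc] using key 0 1 0 0)).resolve_right hu0
    have hF10 : M 1 0 * N 0 0 - M 1 1 * N 0 1 = 0 :=
      (mul_eq_zero.mp (by simpa [wc] using key 1 0 0 0)).resolve_right hu0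
    have hF11 : M 1 0 * N 1 0 - M 1 1 * N 1 1 = -t := by
      have h1 : (M 1 0 * N 1 0 - M 1 1 * N 1 1) * u = -1 := by
        simpa [wc] using key 1 1 0 0
      have h2 : ((M 1 0 * N 1 0 - M 1 1 * N 1 1) + t) * u = 0 := by
        linear_combination h1 + htu
      have h3 := (mul_eq_zero.mp h2).resolve_right hu0
      linear_combination h3
    have hG01 : P 0 0 * Q 1 0 - P 0 1 * Q 1 1 = 0 :=
      (mul_eq_zero.mp (by simpa [wc, mul_comm] using key 0 0 0 1)).resolve_right ht0
    have hG10 : P 1 0 * Q 0 0 - P 1 1 * Q 0 1 = 0 :=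
      (mul_eq_zero.mp (by simpa [wc, mul_comm] using key 0 0 1 0)).resolve_right ht0
    have hG11 : P 1 0 * Q 1 0 - P 1 1 * Q 1 1 = -u := by
      have h1 : t * (P 1 0 * Q 1 0 - P 1 1 * Q 1 1) = -1 := by
        simpa [wc] using key 0 0 1 1
      have h2 : ((P 1 0 * Q 1 0 - P 1 1 * Q 1 1) + u) * t = 0 := by
        linear_combination h1 + htu
      have h3 := (mul_eq_zero.mp h2).resolve_right ht0
      linear_combination h3
    obtain ⟨ht2, hM⟩ := pair_struct M N t ht.symm hF01 hF10 hF11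
    obtain ⟨hu2, hP⟩ := pair_struct P Q u hu.symm hG01 hG10 hG11
    have hut : u = t := by
      have h2 : t * (u - t) = 0 := by linear_combination htu - ht2
      have h3 := (mul_eq_zero.mp h2).resolve_left ht0
      linear_combination h3
    rcases mul_self_eq_one_iff.mp ht2 with h1 | h1
    · left
      refine ⟨N, Q, ?_⟩
      have hMs : M = sharp N := by
        ext i j; rw [hM i j, h1, one_mul]
      have hPs : P = sharp Q := by
        ext i j; rw [hP i j, hut, h1, one_mul]
      rw [hMs, hPs]
    · right
      refine ⟨(sharp N, N, sharp Q, Q), ⟨N, Q, rfl⟩, ?_⟩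
      have hMs : negI * sharp N = M := by
        ext i j; rw [hM i j, h1, neg_coe]; ring
      have hPs : negI * sharp Q = P := by
        ext i j; rw [hP i j, hut, h1, neg_coe]; ring
      show ((negI, 1, negI, 1) : G4) * (sharp N, N, sharp Q, Q) = (M, N, P, Q)
      rw [Prod.mk_mul_mk, Prod.mk_mul_mk, Prod.mk_mul_mk, one_mul, one_mul, hMs, hPs]
  · rintro (⟨A, B, rfl⟩ | ⟨x, ⟨A, B, rfl⟩, rfl⟩)
    · funext i1 i2 i3 i4
      rw [act_apply', s_apply, sharp_pair, sharp_pair]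
    · show act ((negI, 1, negI, 1) * (sharp A, A, sharp B, B)) _ = _
      rw [Prod.mk_mul_mk, Prod.mk_mul_mk, Prod.mk_mul_mk, one_mul, one_mul]
      funext i1 i2 i3 i4
      rw [act_apply', s_apply, neg_sharp_pair, neg_sharp_pair]
      ring
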